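/- Let θ̃ : [0,∞) → ℝ be defined by θ̃(x) = cos x for 0 ≤ x < π/4 and θ̃(x) = (e^{π/4}/√2)·e^{−x} for x ≥ π/4, and let f̃ : ℝ → ℝ be the even extension of θ̃ (i.e. f̃(x) = θ̃(|x|)). Then f̃ is continuously differentiable on ℝ, f̃ is square-integrable on ℝ, f̃ is not identically zero, and for every x ∈ ℝ with |x| ≠ π/4 the function f̃ is four times differentiable at x with f̃''''(x) = f̃(x). -/

import Mathlib

open Real MeasureTheory

/-- The function `θ̃` from Remark 1: `cos x` on `[0, π/4)` and
`(e^{π/4}/√2) e^{-x}` on `[π/4, ∞)`. -/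
noncomputable def thetaTilde (x : ℝ) : ℝ :=
  if x < π / 4 then Real.cos x
  else (Real.exp (π / 4) / Real.sqrt 2) * Real.exp (-x)

/-- The even extension `f̃(x) = θ̃(|x|)` of `θ̃` to all of `ℝ`. -/
noncomputable def fEven (x : ℝ) : ℝ := thetaTilde |x|

noncomputable def Cc : ℝ := Real.exp (π / 4) / Real.sqrt 2

lemma sqrt2_sq : Real.sqrt 2 * Real.sqrt 2 = 2 := Real.mul_self_sqrt (by norm_num)

lemma sqrt2_pos : (0:ℝ) < Real.sqrt 2 := Real.sqrt_pos.2 (by norm_num)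

lemma key_val : Cc * Real.exp (-(π / 4)) = Real.sqrt 2 / 2 := by
  unfold Cc
  rw [div_mul_eq_mul_div, ← Real.exp_add]
  rw [add_neg_cancel, Real.exp_zero]
  rw [div_eq_div_iff (ne_of_gt sqrt2_pos) two_ne_zero, one_mul, sqrt2_sq]

lemma pi4_pos : (0:ℝ) < π / 4 := by positivity

lemma eq_cos : ∀ x ∈ Set.Icc (-(π / 4)) (π / 4), fEven x = Real.cos x := by
  intro x hx
  have habs : |x| ≤ π / 4 := abs_le.2 ⟨hx.1, hx.2⟩
  unfold fEven thetaTilde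
  rcases lt_or_eq_of_le habs with h | h
  · rw [if_pos h, Real.cos_abs]
  · rw [if_neg (by rw [h]; exact lt_irrefl _), h]
    have : (Real.exp (π / 4) / Real.sqrt 2) * Real.exp (-(π / 4)) = Real.sqrt 2 / 2 := key_val
    rw [this, ← Real.cos_pi_div_four, ← h, Real.cos_abs]

lemma eq_right : ∀ x ∈ Set.Ici (π / 4), fEven x = Cc * Real.exp (-x) := by
  intro x hx
  have hx0 : (0:ℝ) ≤ x := le_trans pi4_pos.le hx
  unfold fEven thetaTilde
  rw [abs_of_nonneg hx0, if_neg (not_lt.2 hx)]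
  rfl

lemma eq_left : ∀ x ∈ Set.Iic (-(π / 4)), fEven x = Cc * Real.exp x := by
  intro x hx
  have hx0 : x ≤ 0 := le_trans hx (by linarith [pi4_pos])
  have hx' : x ≤ -(π / 4) := hx
  have habs : ¬ (|x| < π / 4) := by
    rw [abs_of_nonpos hx0]; linarith
  unfold fEven thetaTilde
  rw [if_neg habs, abs_of_nonpos hx0, neg_neg]
  rfl

/-- The derivative of `fEven`. -/
noncomputable def gD (x : ℝ) : ℝ :=
  if x ≤ -(π / 4) then Cc * Real.exp x
  else if x ≤ π / 4 then -Real.sin x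
  else -(Cc * Real.exp (-x))

lemma hasDerivAt_expPos (a x : ℝ) :
    HasDerivAt (fun y => a * Real.exp y) (a * Real.exp x) x :=
  (Real.hasDerivAt_exp x).const_mul a

lemma hasDerivAt_expNeg (a x : ℝ) :
    HasDerivAt (fun y => a * Real.exp (-y)) (-(a * Real.exp (-x))) x := by
  have h1 : HasDerivAt (fun y : ℝ => Real.exp (-y)) (Real.exp (-x) * (-1)) x :=
    (Real.hasDerivAt_exp (-x)).comp x ((hasDerivAt_id x).neg)
  have := h1.const_mul a
  rw [show -(a * Real.exp (-x)) = a * (Real.exp (-x) * -1) by ring]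
  exact this

lemma hasDeriv_fEven : ∀ x : ℝ, HasDerivAt fEven (gD x) x := by
  intro x
  rcases lt_trichotomy x (-(π / 4)) with h1 | h1 | h1
  · -- x < -π/4
    have hg : gD x = Cc * Real.exp x := if_pos h1.le
    rw [hg]
    refine (hasDerivAt_expPos Cc x).congr_of_eventuallyEq ?_
    filter_upwards [Iio_mem_nhds h1] with y hy
    exact eq_left y (Set.mem_Iic.mpr hy.le)
  · -- x = -π/4
    subst h1
    have hg : gD (-(π / 4)) = Real.sqrt 2 / 2 := by
      rw [gD, if_pos le_rfl, key_val]
    rw [hg]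
    have hleft : HasDerivWithinAt fEven (Real.sqrt 2 / 2) (Set.Iic (-(π / 4))) (-(π / 4)) := by
      have := (hasDerivAt_expPos Cc (-(π / 4))).hasDerivWithinAt (s := Set.Iic (-(π / 4)))
      rw [key_val] at this
      exact this.congr eq_left (eq_left _ (Set.mem_Iic.mpr le_rfl))
    have hright : HasDerivWithinAt fEven (Real.sqrt 2 / 2) (Set.Ici (-(π / 4))) (-(π / 4)) := by
      have hcos : HasDerivWithinAt Real.cos (-Real.sin (-(π / 4)))
          (Set.Ici (-(π / 4))) (-(π / 4)) :=
        (Real.hasDerivAt_cos _).hasDerivWithinAt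
      have hval : -Real.sin (-(π / 4)) = Real.sqrt 2 / 2 := by
        rw [Real.sin_neg, neg_neg, Real.sin_pi_div_four]
      rw [hval] at hcos
      refine hcos.congr_of_eventuallyEq ?_ (eq_cos _ ⟨le_rfl, by linarith [pi4_pos]⟩)
      filter_upwards [nhdsWithin_le_nhds (Iio_mem_nhds (by linarith [pi4_pos] :
        -(π / 4) < π / 4)), self_mem_nhdsWithin] with y hy1 hy2
      exact eq_cos y ⟨hy2, hy1.le⟩
    have := hleft.union hright
    rw [Set.Iic_union_Ici] at this
    exact hasDerivWithinAt_univ.mp this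
  · rcases lt_trichotomy x (π / 4) with h2 | h2 | h2
    · -- -π/4 < x < π/4
      have hg : gD x = -Real.sin x := by
        rw [gD, if_neg (not_le.2 h1), if_pos h2.le]
      rw [hg]
      refine (Real.hasDerivAt_cos x).congr_of_eventuallyEq ?_
      filter_upwards [Ioo_mem_nhds h1 h2] with y hy
      exact eq_cos y ⟨hy.1.le, hy.2.le⟩
    · -- x = π/4
      subst h2
      have hg : gD (π / 4) = -(Real.sqrt 2 / 2) := by
        rw [gD, if_neg (not_le.2 (by linarith [pi4_pos])), if_pos le_rfl,
          Real.sin_pi_div_four]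
      rw [hg]
      have hleft : HasDerivWithinAt fEven (-(Real.sqrt 2 / 2)) (Set.Iic (π / 4)) (π / 4) := by
        have hcos : HasDerivWithinAt Real.cos (-Real.sin (π / 4)) (Set.Iic (π / 4)) (π / 4) :=
          (Real.hasDerivAt_cos _).hasDerivWithinAt
        rw [Real.sin_pi_div_four] at hcos
        refine hcos.congr_of_eventuallyEq ?_ (eq_cos _ ⟨by linarith [pi4_pos], le_rfl⟩)
        filter_upwards [nhdsWithin_le_nhds (Ioi_mem_nhds (by linarith [pi4_pos] :
          -(π / 4) < π / 4)), self_mem_nhdsWithin] with y hy1 hy2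
        exact eq_cos y ⟨hy1.le, hy2⟩
      have hright : HasDerivWithinAt fEven (-(Real.sqrt 2 / 2)) (Set.Ici (π / 4)) (π / 4) := by
        have := (hasDerivAt_expNeg Cc (π / 4)).hasDerivWithinAt (s := Set.Ici (π / 4))
        rw [key_val] at this
        exact this.congr eq_right (eq_right _ (Set.mem_Ici.mpr le_rfl))
      have := hleft.union hright
      rw [Set.Iic_union_Ici] at this
      exact hasDerivWithinAt_univ.mp this
    · -- x > π/4
      have hg : gD x = -(Cc * Real.exp (-x)) := by
        rw [gD, if_neg (not_le.2 (by linarith [pi4_pos])), if_neg (not_le.2 h2)]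
      rw [hg]
      refine (hasDerivAt_expNeg Cc x).congr_of_eventuallyEq ?_
      filter_upwards [Ioi_mem_nhds h2] with y hy
      exact eq_right y (Set.mem_Ici.mpr (Set.mem_Ioi.mp hy).le)

lemma continuous_gD : Continuous gD := by
  unfold gD
  have hinner : Continuous fun x : ℝ => if x ≤ π / 4 then -Real.sin x
      else -(Cc * Real.exp (-x)) := by
    refine Continuous.if_le Real.continuous_sin.neg ?_ continuous_id continuous_const ?_
    · exact (continuous_const.mul (Real.continuous_exp.comp continuous_neg)).neg
    · intro x hx
      subst hx
      rw [Real.sin_pi_div_four, key_val]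
  refine Continuous.if_le ?_ hinner continuous_id continuous_const ?_
  · exact continuous_const.mul Real.continuous_exp
  · intro x hx
    subst hx
    rw [if_pos (by linarith [pi4_pos] : -(π/4) ≤ π / 4), key_val, Real.sin_neg,
      Real.sin_pi_div_four, neg_neg]

lemma contDiff_fEven : ContDiff ℝ 1 fEven := by
  rw [contDiff_one_iff_deriv]
  refine ⟨fun x => (hasDeriv_fEven x).differentiableAt, ?_⟩
  have : deriv fEven = gD := funext fun x => (hasDeriv_fEven x).deriv
  rw [this]
  exact continuous_gD

lemma deriv_mul_expNeg (a : ℝ) :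
    deriv (fun x => a * Real.exp (-x)) = fun x => -a * Real.exp (-x) := by
  funext x
  rw [(hasDerivAt_expNeg a x).deriv]
  ring

lemma iteratedDeriv_mul_expNeg (a : ℝ) (n : ℕ) :
    iteratedDeriv n (fun x => a * Real.exp (-x)) = fun x => (-1:ℝ)^n * a * Real.exp (-x) := by
  induction n with
  | zero => funext x; simp
  | succ n ih =>
    rw [iteratedDeriv_succ, ih]
    have h : (fun x => (-1:ℝ)^n * a * Real.exp (-x))
        = fun x => ((-1:ℝ)^n * a) * Real.exp (-x) := rfl
    rw [h, deriv_mul_expNeg]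
    funext x
    ring

lemma iteratedDeriv_mul_exp (a : ℝ) (n : ℕ) :
    iteratedDeriv n (fun x => a * Real.exp x) = fun x => a * Real.exp x := by
  induction n with
  | zero => rw [iteratedDeriv_zero]
  | succ n ih =>
    rw [iteratedDeriv_succ, ih]
    funext x
    exact (hasDerivAt_expPos a x).deriv

lemma iteratedDeriv_four_cos : iteratedDeriv 4 Real.cos = Real.cos := by
  have h1 : iteratedDeriv 1 Real.cos = fun x => -Real.sin x := by
    rw [iteratedDeriv_one, Real.deriv_cos']
  have h2 : iteratedDeriv 2 Real.cos = fun x => -Real.cos x := by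
    rw [iteratedDeriv_succ, h1]
    funext x
    rw [deriv.fun_neg, Real.deriv_sin]
  have h3 : iteratedDeriv 3 Real.cos = fun x => Real.sin x := by
    rw [iteratedDeriv_succ, h2]
    funext x
    rw [deriv.fun_neg, Real.deriv_cos, neg_neg]
  rw [show (4:ℕ) = 3 + 1 from rfl, iteratedDeriv_succ, h3]
  funext x
  exact Real.deriv_sin ▸ congrFun Real.deriv_sin x

/-- One-point fourth-order statement from a local model. -/
lemma local_model {F : ℝ → ℝ} {x : ℝ} (hev : fEven =ᶠ[nhds x] F)
    (hF : ∀ n : ℕ, ContDiff ℝ n F) (h4 : iteratedDeriv 4 F = F) :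
    (∀ k ≤ 3, DifferentiableAt ℝ (iteratedDeriv k fEven) x) ∧
    iteratedDeriv 4 fEven x = fEven x := by
  constructor
  · intro k _
    have hiter : iteratedDeriv k fEven =ᶠ[nhds x] iteratedDeriv k F := by
      filter_upwards [hev.eventually_nhds] with y hy
      exact Filter.EventuallyEq.iteratedDeriv_eq k hy
    have hdF : Differentiable ℝ (iteratedDeriv k F) :=
      (hF (k + 1)).differentiable_iteratedDeriv k (by exact_mod_cast k.lt_succ_self)
    exact (hdF x).congr_of_eventuallyEq hiter
  · rw [Filter.EventuallyEq.iteratedDeriv_eq 4 hev, h4, ← hev.eq_of_nhds]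

lemma fEven_ne_zero : fEven ≠ 0 := by
  intro h
  have h0 : fEven 0 = 1 := by
    rw [eq_cos 0 ⟨by linarith [pi4_pos], pi4_pos.le⟩, Real.cos_zero]
  rw [h] at h0
  simp at h0

lemma integrable_exp_neg_two_abs : Integrable (fun x : ℝ => Real.exp (-2 * |x|)) := by
  have hIoi : IntegrableOn (fun x : ℝ => Real.exp (-2 * |x|)) (Set.Ioi 0) := by
    refine (exp_neg_integrableOn_Ioi 0 (by norm_num : (0:ℝ) < 2)).congr_fun ?_
      measurableSet_Ioi
    intro y hy
    simp only []
    rw [abs_of_pos hy]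
  have hIic : IntegrableOn (fun x : ℝ => Real.exp (-2 * |x|)) (Set.Iic 0) := by
    rw [← Measure.map_neg_eq_self (volume : Measure ℝ)]
    have m : MeasurableEmbedding fun x : ℝ => -x := (Homeomorph.neg ℝ).measurableEmbedding
    rw [m.integrableOn_map_iff]
    simp_rw [Function.comp_def, abs_neg, Set.neg_preimage, Set.neg_Iic, neg_zero]
    exact (integrableOn_Ici_iff_integrableOn_Ioi).mpr hIoi
  have := hIic.union hIoi
  rw [Set.Iic_union_Ioi] at this
  exact integrableOn_univ.mp this

lemma memLp_fEven : MemLp fEven 2 volume := by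
  have hcont : Continuous fEven := contDiff_fEven.continuous
  rw [memLp_two_iff_integrable_sq hcont.aestronglyMeasurable]
  refine Integrable.mono' (integrable_exp_neg_two_abs.const_mul (Real.exp (π / 2)))
    ((hcont.pow 2).aestronglyMeasurable) (Filter.Eventually.of_forall fun x => ?_)
  rw [Real.norm_eq_abs, abs_pow, sq_abs]
  rcases le_or_gt (|x|) (π / 4) with h | h
  · have hc : fEven x = Real.cos x := eq_cos x (abs_le.1 h)
    rw [hc]
    have h1 : Real.cos x ^ 2 ≤ 1 := by
      nlinarith [Real.neg_one_le_cos x, Real.cos_le_one x]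
    have h2 : (1:ℝ) ≤ Real.exp (π / 2) * Real.exp (-2 * |x|) := by
      rw [← Real.exp_add]
      refine Real.one_le_exp ?_
      linarith [h]
    linarith
  · have hc : fEven x = Cc * Real.exp (-|x|) := by
      unfold fEven thetaTilde
      rw [if_neg (not_lt.2 h.le)]
      rfl
    rw [hc]
    have hCc : Cc ^ 2 = Real.exp (π / 2) / 2 := by
      unfold Cc
      rw [div_pow, sq, sq, ← Real.exp_add, sqrt2_sq,
        show π / 4 + π / 4 = π / 2 by ring]
    have hexp : Real.exp (-|x|) ^ 2 = Real.exp (-2 * |x|) := by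
      rw [sq, ← Real.exp_add]
      ring_nf
    rw [mul_pow, hCc, hexp]
    have hpos : (0:ℝ) < Real.exp (-2 * |x|) := Real.exp_pos _
    have hE : (0:ℝ) < Real.exp (π / 2) := Real.exp_pos _
    nlinarith

theorem stmt_3 :
    ContDiff ℝ 1 fEven ∧
    MemLp fEven 2 volume ∧
    fEven ≠ 0 ∧
    ∀ x : ℝ, |x| ≠ π / 4 →
      (∀ k ≤ 3, DifferentiableAt ℝ (iteratedDeriv k fEven) x) ∧
      iteratedDeriv 4 fEven x = fEven x := by
  refine ⟨contDiff_fEven, memLp_fEven, fEven_ne_zero, ?_⟩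
  intro x hx
  rcases lt_trichotomy (|x|) (π / 4) with h | h | h
  · -- |x| < π/4 : model is cos
    refine local_model ?_ (fun n => Real.contDiff_cos) iteratedDeriv_four_cos
    have hmem : x ∈ Set.Ioo (-(π / 4)) (π / 4) := by
      constructor <;> [linarith [abs_lt.1 h]; linarith [abs_lt.1 h]]
    filter_upwards [Ioo_mem_nhds hmem.1 hmem.2] with y hy
    exact eq_cos y ⟨hy.1.le, hy.2.le⟩
  · exact absurd h hx
  · rcases lt_abs.1 h with h' | h'
    · -- x > π/4 : model is Cc * exp (-x)
      refine local_model (F := fun y => Cc * Real.exp (-y)) ?_ (fun n => ?_) ?_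
      · filter_upwards [Ioi_mem_nhds h'] with y hy
        exact eq_right y (Set.mem_Ici.mpr (Set.mem_Ioi.mp hy).le)
      · exact contDiff_const.mul (Real.contDiff_exp.comp contDiff_neg)
      · rw [iteratedDeriv_mul_expNeg]
        funext y
        norm_num
    · -- x < -π/4 : model is Cc * exp x
      have hx' : x < -(π / 4) := by linarith
      refine local_model ?_ (fun n => contDiff_const.mul Real.contDiff_exp)
        (iteratedDeriv_mul_exp Cc 4)
      filter_upwards [Iio_mem_nhds hx'] with y hy
      exact eq_left y (Set.mem_Iic.mpr hy.le)
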